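/- arXiv:1911.00698 — 3 statements merged into one kernel-verified Lean document; each statement's English description precedes it below -/
import Mathlib

section
/- Let 0 < λₙ < λₙ₊₁ and set θ := (2/3)(λₙ + λₙ₊₁) − (1/3)√(λₙ₊₁² − λₙλₙ₊₁ + λₙ²). Then the common value ν := λₙ + λₙ₊₁ − 2θ satisfies ν² + λₙν − (λₙ−θ)² = 0 and ν² + λₙ₊₁ν − (λₙ₊₁−θ)² = 0, and moreover ν = (λₙ₊₁ − λₙ)² / (λₙ + λₙ₊₁ + 2√(λₙ₊₁² − λₙλₙ₊₁ + λₙ²)). -/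
theorem nu_common_value (a b : ℝ) (ha : 0 < a) (hab : a < b)
    (θ : ℝ) (hθ : θ = (2/3) * (a + b) - (1/3) * Real.sqrt (b^2 - a*b + a^2))
    (ν : ℝ) (hν : ν = a + b - 2 * θ) :
    ν^2 + a * ν - (a - θ)^2 = 0 ∧
    ν^2 + b * ν - (b - θ)^2 = 0 ∧
    ν = (b - a)^2 / (a + b + 2 * Real.sqrt (b^2 - a*b + a^2)) := by
  set s := Real.sqrt (b^2 - a*b + a^2) with hsdef
  have harg : 0 ≤ b^2 - a*b + a^2 := by nlinarith
  have hs2 : s^2 = b^2 - a*b + a^2 := Real.sq_sqrt harg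
  have hs0 : 0 ≤ s := Real.sqrt_nonneg _
  have hden : a + b + 2 * s > 0 := by nlinarith
  refine ⟨by nlinarith [hs2], by nlinarith [hs2], ?_⟩
  rw [eq_div_iff (ne_of_gt hden)]
  nlinarith [hs2]
end

section
/- Let 0 < λₙ < λₙ₊₁ and θ := (2/3)(λₙ + λₙ₊₁) − (1/3)√(λₙ₊₁² − λₙλₙ₊₁ + λₙ²). Then μ_min(λₙ, θ) = μ_min(λₙ₊₁, θ), where μ_min(λ,θ) := ((√(4(λ−θ)² + λ²) − λ)/2)². Moreover this θ is the unique point in (λₙ, λₙ₊₁) where equality holds. -/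
theorem mu_min_equalizing_theta (a b : ℝ) (ha : 0 < a) (hab : a < b)
    (θ : ℝ) (hθ : θ = (2/3) * (a + b) - (1/3) * Real.sqrt (b^2 - a*b + a^2)) :
    ((Real.sqrt (4 * (a - θ)^2 + a^2) - a) / 2)^2 =
      ((Real.sqrt (4 * (b - θ)^2 + b^2) - b) / 2)^2 ∧
    ∀ θ' ∈ Set.Ioo a b,
      ((Real.sqrt (4 * (a - θ')^2 + a^2) - a) / 2)^2 =
        ((Real.sqrt (4 * (b - θ')^2 + b^2) - b) / 2)^2 → θ' = θ := by
  set r := Real.sqrt (b^2 - a*b + a^2) with hr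
  have hrnn : (0:ℝ) ≤ b^2 - a*b + a^2 := by nlinarith [sq_nonneg (a-b), sq_nonneg a, sq_nonneg b]
  have hr2 : r^2 = b^2 - a*b + a^2 := Real.sq_sqrt hrnn
  have hr0 : 0 ≤ r := Real.sqrt_nonneg _
  -- r > b - 2a  (so that θ₊ > b)
  have hrgt : b - 2*a < r := by nlinarith [mul_pos ha (sub_pos.mpr hab)]
  constructor
  · -- existence
    have h1 : (3*a+2*b-4*θ)^2 = 4*(a-θ)^2 + a^2 := by
      rw [hθ]; linear_combination (4/3) * hr2
    have h1p : 0 ≤ 3*a+2*b-4*θ := by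
      rw [hθ]; nlinarith [hr2, hr0]
    have h2 : (2*a+3*b-4*θ)^2 = 4*(b-θ)^2 + b^2 := by
      rw [hθ]; linear_combination (4/3) * hr2
    have h2p : 0 ≤ 2*a+3*b-4*θ := by
      rw [hθ]; nlinarith [hr2, hr0]
    have e1 : Real.sqrt (4*(a-θ)^2 + a^2) = 3*a+2*b-4*θ := by
      rw [← h1, Real.sqrt_sq h1p]
    have e2 : Real.sqrt (4*(b-θ)^2 + b^2) = 2*a+3*b-4*θ := by
      rw [← h2, Real.sqrt_sq h2p]
    rw [e1, e2]; ring
  · rintro θ' ⟨hθ'a, hθ'b⟩ heq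
    set s := Real.sqrt (4*(a-θ')^2 + a^2) with hs
    set t := Real.sqrt (4*(b-θ')^2 + b^2) with ht
    have hs0 : 0 ≤ s := Real.sqrt_nonneg _
    have ht0 : 0 ≤ t := Real.sqrt_nonneg _
    have hs2 : s^2 = 4*(a-θ')^2 + a^2 := Real.sq_sqrt (by positivity)
    have ht2 : t^2 = 4*(b-θ')^2 + b^2 := Real.sq_sqrt (by positivity)
    have hsa : a ≤ s := by nlinarith [sq_nonneg (a-θ')]
    have htb : b ≤ t := by nlinarith [sq_nonneg (b-θ')]
    -- from the equality of squares, s - a = t - b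
    have hsq : (s-a)^2 = (t-b)^2 := by linear_combination 4 * heq
    have h3 : s - a = t - b := by
      have habs : |s-a| = |t-b| := by
        rw [← Real.sqrt_sq_eq_abs, ← Real.sqrt_sq_eq_abs, hsq]
      rwa [abs_of_nonneg (by linarith), abs_of_nonneg (by linarith)] at habs
    have habne : a - b ≠ 0 := by linarith
    have hsum : s + t = 5*(a+b) - 8*θ' := by
      have hmul : (a-b) * (s+t) = (a-b) * (5*(a+b) - 8*θ') := by
        linear_combination hs2 - ht2 - (s+t) * h3
      exact mul_left_cancel₀ habne hmul
    have hsval : s = 3*a+2*b-4*θ' := by linear_combination hsum/2 + h3/2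
    have hs2' : (3*a+2*b-4*θ')^2 = 4*(a-θ')^2 + a^2 := by rw [← hsval]; exact hs2
    have hquad : 3*θ'^2 - 4*(a+b)*θ' + (a^2+3*a*b+b^2) = 0 := by
      linear_combination hs2'/4
    have hfac : (θ' - θ) * (3*θ' - 2*(a+b) - r) = 0 := by
      rw [hθ]; linear_combination hquad - (1/3) * hr2
    rcases mul_eq_zero.mp hfac with h | h
    · linarith [sub_eq_zero.mp h]
    · exfalso; nlinarith
end

section
/- Let 0 < λₙ < λₙ₊₁, K := (√λₙ₊₁ − √λₙ)², ε ∈ ℝ, and let f(x) be the determinant of the 4×4 matrix [[λₙ − x, λₙ, 0, 0],[K, λₙ − x, ε, 0],[0, 0, λₙ₊₁ − x, λₙ₊₁],[ε, 0, K, λₙ₊₁ − x]]. Then f(y + √(λₙλₙ₊₁)) = −ε²λₙλₙ₊₁ − 4√(λₙλₙ₊₁)(√λₙ₊₁ − √λₙ)² y² − 2(√λₙ₊₁ − √λₙ)² y³ + y⁴ for all y ∈ ℝ. -/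
theorem determinant_identity_4x4 (a b ε : ℝ) (ha : 0 < a) (hab : a < b)
    (K : ℝ) (hK : K = (Real.sqrt b - Real.sqrt a)^2) :
    ∀ y : ℝ,
      (!![a - (y + Real.sqrt (a * b)), a, 0, 0;
          K, a - (y + Real.sqrt (a * b)), ε, 0;
          0, 0, b - (y + Real.sqrt (a * b)), b;
          ε, 0, K, b - (y + Real.sqrt (a * b))] : Matrix (Fin 4) (Fin 4) ℝ).det =
        -ε^2 * (a * b) - 4 * Real.sqrt (a * b) * (Real.sqrt b - Real.sqrt a)^2 * y^2 -
          2 * (Real.sqrt b - Real.sqrt a)^2 * y^3 + y^4 := by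
  intro y
  have ha' : Real.sqrt a ^ 2 = a := Real.sq_sqrt ha.le
  have hb' : Real.sqrt b ^ 2 = b := Real.sq_sqrt (ha.trans hab).le
  have hab' : Real.sqrt (a * b) = Real.sqrt a * Real.sqrt b :=
    Real.sqrt_mul ha.le b
  simp [Matrix.det_succ_row_zero, Fin.sum_univ_succ, Fin.succAbove]
  rw [hK, hab']
  obtain ⟨u, hu⟩ : ∃ u, Real.sqrt a = u := ⟨_, rfl⟩
  obtain ⟨v, hv⟩ : ∃ v, Real.sqrt b = v := ⟨_, rfl⟩
  rw [hu] at ha'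
  rw [hv] at hb'
  rw [hu, hv]
  subst ha' hb'
  ring
end
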